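/- Every nondegenerate maximal simplex with vertices among the vertices of a product of two simplices Δ^a × Δ^b has an exterior facet: among any a+b+1 vertices of Δ^a × Δ^b spanning a simplex, some coordinate column of their standard matrix contains at most one nonzero entry, so a+b of the vertices lie in a common facet of the polytope. -/

import Mathlib

/-- A vertex of `Δ^a × Δ^b` in standard coordinates: a 0/1 vector in `ℝ^{a+b+2}` with
exactly one 1 among the first `a+1` coordinates and exactly one 1 among the last `b+1`. -/
def IsProdVertex (a b : ℕ) (x : Fin (a + 1) ⊕ Fin (b + 1) → ℝ) : Prop :=
  (∀ z, x z = 0 ∨ x z = 1) ∧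
    (∑ i : Fin (a + 1), x (Sum.inl i)) = 1 ∧ (∑ j : Fin (b + 1), x (Sum.inr j)) = 1

lemma aux_one {n : ℕ} (x : Fin n → ℝ) (h01 : ∀ i, x i = 0 ∨ x i = 1)
    (hs : ∑ i, x i = 1) :
    (Finset.univ.filter (fun i => x i ≠ 0)).card = 1 := by
  have key : ∀ i ∈ Finset.univ.filter (fun i => x i ≠ 0), x i = 1 := fun i hi =>
    (h01 i).resolve_left (Finset.mem_filter.mp hi).2
  have h : (1 : ℝ) = ((Finset.univ.filter (fun i => x i ≠ 0)).card : ℝ) := by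
    calc (1:ℝ) = ∑ i, x i := hs.symm
      _ = ∑ i ∈ Finset.univ.filter (fun i => x i ≠ 0), x i :=
          (Finset.sum_filter_ne_zero _).symm
      _ = _ := by rw [Finset.sum_congr rfl key]; simp
  exact_mod_cast h.symm

theorem stmt14 (a b : ℕ) (w : Fin (a + b + 1) → (Fin (a + 1) ⊕ Fin (b + 1) → ℝ))
    (hv : ∀ r, IsProdVertex a b (w r)) (hindep : AffineIndependent ℝ w) :
    ∃ z : Fin (a + 1) ⊕ Fin (b + 1),
      {r : Fin (a + b + 1) | w r z ≠ 0}.ncard ≤ 1 ∧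
      ∃ S : Finset (Fin (a + b + 1)), S.card = a + b ∧ ∀ r ∈ S, w r z = 0 := by
  -- every row has exactly 2 nonzeros
  have hrow : ∀ r, (Finset.univ.filter (fun z => w r z ≠ 0)).card = 2 := by
    intro r
    obtain ⟨h01, h1, h2⟩ := hv r
    classical
    rw [Finset.card_filter, Fintype.sum_sum_type]
    have e1 : (∑ i : Fin (a+1), if w r (Sum.inl i) ≠ 0 then 1 else 0)
        = (Finset.univ.filter (fun i => w r (Sum.inl i) ≠ 0)).card := by
      rw [Finset.card_filter]
    have e2 : (∑ j : Fin (b+1), if w r (Sum.inr j) ≠ 0 then 1 else 0)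
        = (Finset.univ.filter (fun j => w r (Sum.inr j) ≠ 0)).card := by
      rw [Finset.card_filter]
    rw [e1, e2, aux_one _ (fun i => h01 (Sum.inl i)) h1,
      aux_one _ (fun j => h01 (Sum.inr j)) h2]
  -- double counting
  classical
  have hdc : ∑ z : Fin (a+1) ⊕ Fin (b+1), (Finset.univ.filter (fun r => w r z ≠ 0)).card
      = 2 * (a + b + 1) := by
    have : ∑ z : Fin (a+1) ⊕ Fin (b+1), (Finset.univ.filter (fun r => w r z ≠ 0)).card
        = ∑ r : Fin (a+b+1), (Finset.univ.filter (fun z => w r z ≠ 0)).card := by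
      simp only [Finset.card_filter]
      exact Finset.sum_comm
    rw [this]
    simp [hrow, Finset.sum_const, mul_comm]
  -- pigeonhole
  have hz : ∃ z, (Finset.univ.filter (fun r => w r z ≠ 0)).card ≤ 1 := by
    by_contra h
    push_neg at h
    have : 2 * (a + b + 2) ≤ ∑ z : Fin (a+1) ⊕ Fin (b+1),
        (Finset.univ.filter (fun r => w r z ≠ 0)).card := by
      calc 2 * (a + b + 2) = ∑ _z : Fin (a+1) ⊕ Fin (b+1), 2 := by
            simp [Fintype.card_sum, mul_comm]; ring
        _ ≤ _ := Finset.sum_le_sum (fun z _ => h z)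
    omega
  obtain ⟨z, hz⟩ := hz
  refine ⟨z, ?_, ?_⟩
  · rw [Set.ncard_eq_toFinset_card']
    convert hz using 2
    ext r
    simp
  · have hsub : a + b ≤ (Finset.univ.filter (fun r => w r z = 0)).card := by
      have := Finset.card_filter_add_card_filter_not
        (s := (Finset.univ : Finset (Fin (a+b+1)))) (p := fun r => w r z = 0)
      simp only [Finset.card_univ, Fintype.card_fin] at this
      have hne : (Finset.univ.filter (fun r => ¬ w r z = 0)).card ≤ 1 := hz
      omega
    obtain ⟨S, hS, hcard⟩ := Finset.exists_subset_card_eq hsub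
    exact ⟨S, hcard, fun r hr => (Finset.mem_filter.mp (hS hr)).2⟩
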